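/- The Farey map F defined by F(x) = x/(1-x) for 0 ≤ x ≤ 1/2 and F(x) = (1-x)/x for 1/2 < x ≤ 1 preserves the measure μ on [0,1] with density dμ = dx/x; that is, for every Borel set B ⊆ [0,1], μ(F⁻¹(B)) = μ(B). -/

import Mathlib

open MeasureTheory

noncomputable def farey (x : ℝ) : ℝ := if x ≤ 1/2 then x / (1 - x) else (1 - x) / x

noncomputable def fareyMeasure : Measure ℝ :=
  (volume.restrict (Set.Icc (0:ℝ) 1)).withDensity (fun x => ENNReal.ofReal (1 / x))

lemma lintegral_image_deriv {s : Set ℝ} {f f' : ℝ → ℝ} (hs : MeasurableSet s)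
    (hf' : ∀ x ∈ s, HasDerivWithinAt f (f' x) s x) (hf : Set.InjOn f s) (g : ℝ → ENNReal) :
    ∫⁻ x in f '' s, g x = ∫⁻ x in s, ENNReal.ofReal |f' x| * g (f x) := by
  simpa only [ContinuousLinearMap.det_toSpanSingleton] using
    lintegral_image_eq_lintegral_abs_det_fderiv_mul volume hs
      (fun x hx => (hf' x hx).hasFDerivWithinAt) hf g

lemma fareyMeasure_apply {S : Set ℝ} (hS : MeasurableSet S) (hS1 : S ⊆ Set.Icc (0:ℝ) 1) :
    fareyMeasure S = ∫⁻ x in S, ENNReal.ofReal (1 / x) := by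
  rw [fareyMeasure, withDensity_apply _ hS, Measure.restrict_restrict hS,
    Set.inter_eq_self_of_subset_left hS1]

lemma farey_measurable : Measurable farey := by
  apply Measurable.ite
  · exact measurableSet_Iic
  · exact measurable_id.div (measurable_const.sub measurable_id)
  · exact (measurable_const.sub measurable_id).div measurable_id

lemma image1 (B : Set ℝ) (hB1 : B ⊆ Set.Icc (0:ℝ) 1) :
    (fun y : ℝ => y / (1 + y)) '' B
      = (farey ⁻¹' B ∩ Set.Icc (0:ℝ) 1) ∩ Set.Icc 0 (1/2) := by
  ext x
  constructor
  · rintro ⟨y, hyB, rfl⟩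
    obtain ⟨hy0, hy1⟩ := hB1 hyB
    have h1y : (0:ℝ) < 1 + y := by linarith
    have hx0 : (0:ℝ) ≤ y / (1 + y) := div_nonneg hy0 h1y.le
    have hx2 : y / (1 + y) ≤ 1/2 := by rw [div_le_iff₀ h1y]; linarith
    have hfx : farey (y / (1 + y)) = y := by
      rw [farey, if_pos hx2]
      field_simp
      ring
    refine ⟨⟨?_, hx0, by linarith⟩, hx0, hx2⟩
    simpa [hfx] using hyB
  · rintro ⟨⟨hxB, _, _⟩, hx0, hx2⟩
    have h1x : (1:ℝ) - x ≠ 0 := by intro h; rw [sub_eq_zero] at h; rw [← h] at hx2; norm_num at hx2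
    have hfx : farey x = x / (1 - x) := by rw [farey, if_pos hx2]
    refine ⟨farey x, hxB, ?_⟩
    rw [hfx]
    field_simp
    ring

lemma image2 (B : Set ℝ) (hB1 : B ⊆ Set.Icc (0:ℝ) 1) :
    (fun y : ℝ => 1 / (1 + y)) '' B
      = (fun x : ℝ => (1 - x) / x) ⁻¹' B ∩ Set.Icc (1/2) 1 := by
  ext x
  constructor
  · rintro ⟨y, hyB, rfl⟩
    obtain ⟨hy0, hy1⟩ := hB1 hyB
    have h1y : (0:ℝ) < 1 + y := by linarith
    have hx1 : (1:ℝ) / (1 + y) ≤ 1 := by rw [div_le_one h1y]; linarith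
    have hx2 : (1:ℝ)/2 ≤ 1 / (1 + y) := by rw [le_div_iff₀ h1y]; linarith
    have hfx : (1 - 1 / (1 + y)) / (1 / (1 + y)) = y := by field_simp; ring
    refine ⟨?_, hx2, hx1⟩
    show (1 - 1 / (1 + y)) / (1 / (1 + y)) ∈ B
    rw [hfx]; exact hyB
  · rintro ⟨hxB, hx2, hx1⟩
    have hx0 : (0:ℝ) < x := by linarith
    refine ⟨(1 - x) / x, hxB, ?_⟩
    show (1:ℝ) / (1 + (1 - x) / x) = x
    have : 1 + (1 - x) / x = 1 / x := by field_simp; ring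
    rw [this, one_div_one_div]

lemma preim2 (B : Set ℝ) :
    (farey ⁻¹' B ∩ Set.Icc (0:ℝ) 1) ∩ Set.Ioc (1/2) 1
      = ((fun x : ℝ => (1 - x) / x) ⁻¹' B ∩ Set.Icc (1/2) 1) \ {1/2} := by
  ext x
  simp only [Set.mem_inter_iff, Set.mem_preimage, Set.mem_Icc, Set.mem_Ioc, Set.mem_diff,
    Set.mem_singleton_iff]
  constructor
  · rintro ⟨⟨hxB, hx0, hx1⟩, hx2, hx1'⟩
    have : farey x = (1 - x) / x := by rw [farey, if_neg (by linarith)]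
    rw [this] at hxB
    exact ⟨⟨hxB, by linarith, hx1'⟩, by intro h; rw [h] at hx2; norm_num at hx2⟩
  · rintro ⟨⟨hxB, hx2, hx1⟩, hne⟩
    have hx2' : (1:ℝ)/2 < x := lt_of_le_of_ne hx2 (Ne.symm hne)
    have : farey x = (1 - x) / x := by rw [farey, if_neg (by linarith)]
    exact ⟨⟨by rw [this]; exact hxB, by linarith, hx1⟩, hx2', hx1⟩

theorem farey_measure_preserving (B : Set ℝ) (hB : MeasurableSet B)
    (hB1 : B ⊆ Set.Icc (0:ℝ) 1) :
    fareyMeasure (farey ⁻¹' B ∩ Set.Icc (0:ℝ) 1) = fareyMeasure B := by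
  set A := farey ⁻¹' B ∩ Set.Icc (0:ℝ) 1 with hA
  have hAm : MeasurableSet A := (farey_measurable hB).inter measurableSet_Icc
  have hAsub : A ⊆ Set.Icc (0:ℝ) 1 := Set.inter_subset_right
  -- split A
  have hsplit : A = (A ∩ Set.Icc 0 (1/2)) ∪ (A ∩ Set.Ioc (1/2) 1) := by
    rw [← Set.inter_union_distrib_left, Set.Icc_union_Ioc_eq_Icc (by norm_num) (by norm_num)]
    exact (Set.inter_eq_self_of_subset_left hAsub).symm
  have hdisj : Disjoint (A ∩ Set.Icc 0 (1/2)) (A ∩ Set.Ioc (1/2) 1) :=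
    Set.disjoint_left.2 fun x hx hy => absurd hx.2.2 (not_le.2 hy.2.1)
  have hsum : fareyMeasure A
      = fareyMeasure (A ∩ Set.Icc 0 (1/2)) + fareyMeasure (A ∩ Set.Ioc (1/2) 1) := by
    conv_lhs => rw [hsplit]
    exact measure_union hdisj (hAm.inter measurableSet_Ioc)
  -- deal with the half point
  have hhalf : fareyMeasure {(1/2 : ℝ)} = 0 := by
    apply withDensity_absolutelyContinuous _ _
    rw [Measure.restrict_apply (measurableSet_singleton _)]
    exact measure_mono_null Set.inter_subset_left (Real.volume_singleton)
  have h2 : fareyMeasure (A ∩ Set.Ioc (1/2) 1)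
      = fareyMeasure ((fun x : ℝ => (1 - x) / x) ⁻¹' B ∩ Set.Icc (1/2) 1) := by
    rw [preim2 B, measure_diff_null hhalf]
  -- measurability and bounds
  have hP2m : MeasurableSet ((fun y : ℝ => 1 / (1 + y)) '' B) := by
    rw [image2 B hB1]
    exact (((measurable_const.sub measurable_id).div measurable_id) hB).inter measurableSet_Icc
  have hP2sub : (fun y : ℝ => 1 / (1 + y)) '' B ⊆ Set.Icc (0:ℝ) 1 := by
    rw [image2 B hB1]
    exact fun x hx => ⟨by have := hx.2.1; norm_num at this ⊢; linarith, hx.2.2⟩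
  have hA1m : MeasurableSet ((fun y : ℝ => y / (1 + y)) '' B) := by
    rw [image1 B hB1]
    exact (hAm.inter measurableSet_Icc)
  have hA1sub : (fun y : ℝ => y / (1 + y)) '' B ⊆ Set.Icc (0:ℝ) 1 := by
    rw [image1 B hB1]
    exact fun x hx => hAsub hx.1
  -- change of variables, branch 1
  have hne : ∀ y ∈ B, (1:ℝ) + y ≠ 0 := fun y hy => by
    have := (hB1 hy).1; intro h; linarith
  have hd1 : ∀ y ∈ B, HasDerivWithinAt (fun y : ℝ => y / (1 + y)) (1/(1+y)^2) B y := by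
    intro y hy
    have h := (hasDerivAt_id y).div ((hasDerivAt_const y (1:ℝ)).add (hasDerivAt_id y)) (hne y hy)
    have : HasDerivAt (fun y : ℝ => y / (1 + y)) (1/(1+y)^2) y := by
      have := hne y hy; refine h.congr_deriv ?_; simp only [Pi.add_apply, id]; field_simp; ring
    exact this.hasDerivWithinAt
  have hd2 : ∀ y ∈ B, HasDerivWithinAt (fun y : ℝ => 1 / (1 + y)) (-(1/(1+y)^2)) B y := by
    intro y hy
    have h := (hasDerivAt_const y (1:ℝ)).div ((hasDerivAt_const y (1:ℝ)).add (hasDerivAt_id y))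
      (hne y hy)
    have : HasDerivAt (fun y : ℝ => 1 / (1 + y)) (-(1/(1+y)^2)) y := by
      have := hne y hy; refine h.congr_deriv ?_; simp only [Pi.add_apply, id]; field_simp; ring
    exact this.hasDerivWithinAt
  have hinj1 : Set.InjOn (fun y : ℝ => y / (1 + y)) B := by
    intro a ha b hb h
    have ha' := hne a ha; have hb' := hne b hb
    field_simp at h
    nlinarith [h]
  have hinj2 : Set.InjOn (fun y : ℝ => 1 / (1 + y)) B := by
    intro a ha b hb h
    have ha' := hne a ha; have hb' := hne b hb
    field_simp at h
    linarith
  have e1 : fareyMeasure (A ∩ Set.Icc 0 (1/2))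
      = ∫⁻ y in B, ENNReal.ofReal |1/(1+y)^2| * ENNReal.ofReal (1 / (y / (1 + y))) := by
    rw [← image1 B hB1, fareyMeasure_apply hA1m hA1sub, lintegral_image_deriv hB hd1 hinj1]
  have e2 : fareyMeasure ((fun x : ℝ => (1 - x) / x) ⁻¹' B ∩ Set.Icc (1/2) 1)
      = ∫⁻ y in B, ENNReal.ofReal |(-(1/(1+y)^2))| * ENNReal.ofReal (1 / (1 / (1 + y))) := by
    rw [← image2 B hB1, fareyMeasure_apply hP2m hP2sub, lintegral_image_deriv hB hd2 hinj2]
  rw [hsum, h2, e1, e2, fareyMeasure_apply hB hB1]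
  -- combine the two integrals
  have hm1 : Measurable fun y : ℝ =>
      ENNReal.ofReal |1/(1+y)^2| * ENNReal.ofReal (1 / (y / (1 + y))) := by
    fun_prop
  rw [← lintegral_add_left hm1]
  apply lintegral_congr_ae
  have h0 : ∀ᵐ y ∂(volume.restrict B), y ≠ 0 := by
    rw [ae_iff]
    have : {y : ℝ | ¬ y ≠ 0} = {0} := by ext y; simp
    rw [this, Measure.restrict_apply (measurableSet_singleton _)]
    exact measure_mono_null Set.inter_subset_left Real.volume_singleton
  filter_upwards [ae_restrict_mem hB, h0] with y hyB hy0
  obtain ⟨hy0', hy1⟩ := hB1 hyB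
  have hyp : 0 < y := lt_of_le_of_ne hy0' (Ne.symm hy0)
  have h1y : (0:ℝ) < 1 + y := by linarith
  rw [abs_neg, abs_of_pos (by positivity), ← ENNReal.ofReal_mul (by positivity),
    ← ENNReal.ofReal_mul (by positivity), ← ENNReal.ofReal_add (by positivity) (by positivity)]
  congr 1
  field_simp
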